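/- Let m be an integer with 3 ≤ m ≤ 2^{n+1}−2; set m′ = m if m is odd and m′ = m−1 if m is even, r′ = ⌊(m′+1)/4⌋, and d_i = ⌊log₂((m′−1)/(2i−1))⌋ for 1 ≤ i ≤ r′. Let A′ ⊆ A be the F₂[v,v^{−1}]-linear span of the basis elements γ_{(t₁,…,t_r)} with t_i = 0 for i > r′ and t_i < 2^{d_i} for i ≤ r′, and assume A′ is closed under multiplication (so A′ is a subalgebra, as holds for the dual K(n)*(SO_m)^∨). Then A′ contains no idempotents other than 0 and 1. -/

import Mathlib

open scoped Classical

noncomputable section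

/-- The base ring `F₂[v, v⁻¹]` of Laurent polynomials over `F₂`. -/
abbrev LL : Type := LaurentPolynomial (ZMod 2)

/-- `k_i = ⌊log₂((2^(n+1) - 2)/(2i - 1))⌋` (the index `i : Fin (2^(n-1))` corresponds
to `i + 1 ∈ {1, …, 2^(n-1)}`). -/
abbrev kfun (n : ℕ) (i : Fin (2 ^ (n - 1))) : ℕ :=
  Nat.log 2 ((2 ^ (n + 1) - 2) / (2 * (i : ℕ) + 1))

/-- Exponent tuples indexing the basis of `K(n)*(SO_{2^(n+1)-1})^∨`. -/
abbrev MIdx (n : ℕ) : Type := {t : Fin (2 ^ (n - 1)) → ℕ // ∀ i, t i < 2 ^ kfun n i}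

/-- The zero tuple (indexing the unit of the algebra). -/
def zeroIdx (n : ℕ) : MIdx n := ⟨fun _ => 0, fun _ => pow_pos (by norm_num) _⟩

/-- Given a tuple `t`, the tuple `u` with `u_{j(i)} = 1` for every `i` with `t_i ≠ 0` and
all other entries `0`. -/
def uIdx (n : ℕ) (hk : ∀ i, 1 ≤ kfun n i)
    (jf : Fin (2 ^ (n - 1)) → Fin (2 ^ (n - 1))) (t : MIdx n) : MIdx n :=
  ⟨fun l => if ∃ i, t.1 i ≠ 0 ∧ jf i = l then 1 else 0, by
    intro l
    have h2 : 1 < 2 ^ kfun n l := Nat.one_lt_two_pow_iff.mpr (by have := hk l; omega)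
    dsimp only
    split
    · exact h2
    · exact lt_trans Nat.zero_lt_one h2⟩

/-- **No nontrivial idempotents in `K(n)*(SO_m)^∨` for `m ≤ 2^(n+1) - 2`**
(Propositions `idem-small` and `idem-answer`, Corollary `cl-idem-answer`).
Let `A` be the algebra `K(n)*(SO_{2^(n+1)-1})^∨` of statement `idem-answer`, and for
`3 ≤ m ≤ 2^(n+1) - 2` put `m' = m` if `m` is odd and `m' = m - 1` otherwise,
`r' = ⌊(m'+1)/4⌋` and `d_i = ⌊log₂((m'-1)/(2i-1))⌋`.  Let `A' ⊆ A` be the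
`F₂[v,v⁻¹]`-linear span of the basis elements `γ_t` with `t_i = 0` for `i > r'` and
`t_i < 2^(d_i)` for `i ≤ r'`; assume `A'` is closed under multiplication.  Then `A'`
contains no idempotents other than `0` and `1`. -/
theorem stmt5 (n : ℕ) (hn : 1 ≤ n) (hk : ∀ i, 1 ≤ kfun n i)
    (jf : Fin (2 ^ (n - 1)) → Fin (2 ^ (n - 1)))
    (hjf : ∀ i, 2 * ((jf i : ℕ) + 1) + 2 ^ n = (2 * (i : ℕ) + 1) * 2 ^ kfun n i + 2)
    (hjinj : Function.Injective jf)
    (A : Type) [CommRing A] [Algebra LL A]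
    (b : Module.Basis (MIdx n) LL A)
    (hone : b (zeroIdx n) = 1)
    (hsq : ∀ t : MIdx n, (∀ i, t.1 i = 0 ∨ t.1 i = 2 ^ (kfun n i - 1)) →
      b t ^ 2 = (LaurentPolynomial.T 1 : LL) ^
          (Finset.univ.filter fun i => t.1 i ≠ 0).card • b (uIdx n hk jf t))
    (hsq0 : ∀ t : MIdx n, ¬ (∀ i, t.1 i = 0 ∨ t.1 i = 2 ^ (kfun n i - 1)) →
      b t ^ 2 = 0)
    (m : ℕ) (hm3 : 3 ≤ m) (hm : m ≤ 2 ^ (n + 1) - 2)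
    (A' : Submodule LL A)
    (hA' : A' = Submodule.span LL (⇑b '' {t : MIdx n |
      ∀ i : Fin (2 ^ (n - 1)),
        (((if m % 2 = 1 then m else m - 1) + 1) / 4 < (i : ℕ) + 1 → t.1 i = 0) ∧
        ((i : ℕ) + 1 ≤ ((if m % 2 = 1 then m else m - 1) + 1) / 4 →
          t.1 i < 2 ^ Nat.log 2
            (((if m % 2 = 1 then m else m - 1) - 1) / (2 * (i : ℕ) + 1)))}))
    (hA'mul : ∀ x ∈ A', ∀ y ∈ A', x * y ∈ A') :
    ∀ e ∈ A', e ^ 2 = e → e = 0 ∨ e = 1 := by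
  classical
  intro e heA' hidem
  -- Characteristic 2 setup
  have halginj : Function.Injective (algebraMap LL A) := by
    intro x y hxy
    have h : (b.repr (x • b (zeroIdx n))) (zeroIdx n)
        = (b.repr (y • b (zeroIdx n))) (zeroIdx n) := by
      rw [hone, ← Algebra.algebraMap_eq_smul_one, ← Algebra.algebraMap_eq_smul_one, hxy]
    simpa [Module.Basis.repr_self] using h
  haveI hLL2 : CharP LL 2 := charP_of_injective_algebraMap
    (algebraMap (ZMod 2) LL).injective 2
  haveI hA2 : CharP A 2 := charP_of_injective_algebraMap halginj 2
  haveI : Fact (Nat.Prime 2) := ⟨Nat.prime_two⟩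
  haveI : ExpChar A 2 := ExpChar.prime Nat.prime_two
  have hnzd : NoZeroDivisors LL := inferInstanceAs (NoZeroDivisors (AddMonoidAlgebra (ZMod 2) ℤ))
  -- notation
  set M' : ℕ := if m % 2 = 1 then m else m - 1 with hM'
  have hM'le : M' ≤ m := by rw [hM']; split <;> omega
  set F : MIdx n →₀ LL := b.repr e with hF
  set Adm : MIdx n → Prop := fun t => ∀ i, t.1 i = 0 ∨ t.1 i = 2 ^ (kfun n i - 1) with hAdm
  set cpow : MIdx n → ℕ := fun t => (Finset.univ.filter fun i => t.1 i ≠ 0).card with hcpow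
  -- support is contained in the A' index set
  rw [hA'] at heA'
  have hsupp := (Module.Basis.mem_span_image b).mp heA'
  -- expansion of e
  have he : e = ∑ t ∈ F.support, F t • b t := by
    conv_lhs => rw [← b.linearCombination_repr e]
    rw [Finsupp.linearCombination_apply, Finsupp.sum]
  -- the squared expansion
  have he3 : e = ∑ t ∈ F.support.filter Adm,
      ((F t) ^ 2 * (LaurentPolynomial.T 1 : LL) ^ cpow t) • b (uIdx n hk jf t) := by
    conv_lhs => rw [← hidem, he]
    rw [sum_pow_char]
    rw [← Finset.sum_filter_add_sum_filter_not F.support Adm]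
    have h1 : ∑ t ∈ F.support.filter (fun t => ¬ Adm t), (F t • b t) ^ 2 = 0 :=
      Finset.sum_eq_zero fun t ht => by
        rw [smul_pow, hsq0 t (Finset.mem_filter.mp ht).2, smul_zero]
    rw [h1, add_zero]
    refine Finset.sum_congr rfl fun t ht => ?_
    rw [smul_pow, hsq t (Finset.mem_filter.mp ht).2, smul_smul]
  -- coefficientwise consequence
  have hcoef : ∀ w : MIdx n, F w = ∑ t ∈ F.support.filter Adm,
      (if uIdx n hk jf t = w then (F t) ^ 2 * (LaurentPolynomial.T ((cpow t : ℤ)) : LL) else 0) := by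
    intro w
    have h := congrArg (fun z => (b.repr z) w) he3
    simpa [map_sum, Finsupp.finset_sum_apply, Finsupp.smul_apply, Module.Basis.repr_self,
      Finsupp.single_apply, mul_ite, mul_one, mul_zero, ← ite_and, and_self] using h
  -- zero tuple facts
  have htne : ∀ t : MIdx n, t ≠ zeroIdx n ↔ ∃ i, t.1 i ≠ 0 := by
    intro t
    constructor
    · intro h
      by_contra hc
      push_neg at hc
      exact h (Subtype.ext (funext fun i => hc i))
    · rintro ⟨i, hi⟩ rfl
      exact hi rfl
  have hu0 : ∀ t : MIdx n, uIdx n hk jf t = zeroIdx n ↔ t = zeroIdx n := by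
    intro t
    constructor
    · intro h
      by_contra hc
      obtain ⟨i, hi⟩ := (htne t).mp hc
      have : (uIdx n hk jf t).1 (jf i) = 1 := by
        show (if ∃ i', t.1 i' ≠ 0 ∧ jf i' = jf i then 1 else 0) = 1
        exact if_pos ⟨i, hi, rfl⟩
      rw [h] at this
      exact absurd this (by simp [zeroIdx])
    · rintro rfl
      refine Subtype.ext (funext fun l => ?_)
      show (if ∃ i, (zeroIdx n).1 i ≠ 0 ∧ jf i = l then 1 else 0) = 0
      rw [if_neg]
      rintro ⟨i, hi, -⟩
      exact hi rfl
  -- every support element has a preimage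
  have hpre : ∀ w ∈ F.support, ∃ t, t ∈ F.support ∧ Adm t ∧ uIdx n hk jf t = w := by
    intro w hw
    by_contra hcon
    push_neg at hcon
    have h0 := hcoef w
    rw [Finset.sum_eq_zero (fun t ht => by
      rw [if_neg]
      exact hcon t (Finset.mem_filter.mp ht).1 (Finset.mem_filter.mp ht).2)] at h0
    exact Finsupp.mem_support_iff.mp hw h0
  -- Main claim : F.support ⊆ {zeroIdx n}
  have hsupp0 : F.support ⊆ {zeroIdx n} := by
    by_contra hcon
    -- get a nonzero support element
    have hTne : (F.support.filter (fun t => t ≠ zeroIdx n)).Nonempty := by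
      rw [Finset.filter_nonempty_iff]
      by_contra hc
      push_neg at hc
      exact hcon fun t ht => Finset.mem_singleton.mpr (hc t ht)
    -- weight function
    set μ : MIdx n → ℕ := fun t => ∑ i ∈ Finset.univ.filter (fun i => t.1 i ≠ 0), ((i : ℕ) + 1)
      with hμ
    obtain ⟨w, hwT, hwmax⟩ := Finset.exists_max_image _ μ hTne
    rw [Finset.mem_filter] at hwT
    obtain ⟨t, htsupp, htadm, htu⟩ := hpre w hwT.1
    have htne0 : t ≠ zeroIdx n := by
      intro h
      rw [h, (hu0 (zeroIdx n)).mpr rfl] at htu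
      exact hwT.2 htu.symm
    -- entries of t are ≤ 1
    obtain ⟨s, -, -, hsu⟩ := hpre t htsupp
    have htle1 : ∀ l, t.1 l ≤ 1 := by
      intro l
      rw [← hsu]
      show (if ∃ i, s.1 i ≠ 0 ∧ jf i = l then 1 else 0) ≤ 1
      split <;> omega
    -- t lies in the A'-index set
    have htS := hsupp htsupp
    simp only [Set.mem_setOf_eq] at htS
    -- key : jf decreases on the support of t
    have hkey : ∀ i : Fin (2 ^ (n - 1)), t.1 i ≠ 0 → (jf i : ℕ) < (i : ℕ) := by
      intro i hi
      have h1 : t.1 i = 1 := by have := htle1 i; omega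
      have hki : kfun n i = 1 := by
        rcases htadm i with h | h
        · exact absurd h hi
        · have h2 : 2 ^ (kfun n i - 1) = 1 := by rw [← h, h1]
        -- 2 ^ e = 1 → e = 0
          have h3 : kfun n i - 1 = 0 := by
            by_contra hc
            have := Nat.one_lt_two_pow_iff.mpr hc
            omega
          have := hk i
          omega
      -- arithmetic from hjf
      have hji := hjf i
      rw [hki, pow_one] at hji
      -- A'-set constraint
      have hrle : (i : ℕ) + 1 ≤ (M' + 1) / 4 := by
        by_contra hc
        push_neg at hc
        exact hi ((htS i).1 hc)
      have hdi := (htS i).2 hrle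
      rw [h1] at hdi
      set q : ℕ := (M' - 1) / (2 * (i : ℕ) + 1) with hq
      have hd1 : Nat.log 2 q ≠ 0 := by
        intro h
        rw [h] at hdi
        simp at hdi
      have hq0 : q ≠ 0 := by
        intro h
        rw [h, Nat.log_zero_right] at hd1
        exact hd1 rfl
      have hq2 : 2 ≤ q := by
        have h2 := Nat.pow_log_le_self 2 hq0
        have : (2 : ℕ) ^ 1 ≤ 2 ^ Nat.log 2 q := Nat.pow_le_pow_right (by norm_num) (by omega)
        omega
      have hqle : 2 * (2 * (i : ℕ) + 1) ≤ M' - 1 := by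
        rw [hq] at hq2
        exact (Nat.le_div_iff_mul_le (by omega)).mp hq2
      -- now pure arithmetic
      have h2n : 2 ^ n = 2 * 2 ^ (n - 1) := by
        rw [← pow_succ']
        congr 1
        omega
      have hmP : m ≤ 2 * 2 ^ n - 2 := by
        have : (2 : ℕ) ^ (n + 1) = 2 * 2 ^ n := by rw [pow_succ]; ring
        omega
      have hP2 : 2 ≤ 2 ^ n := by
        calc (2:ℕ) = 2 ^ 1 := (pow_one 2).symm
        _ ≤ 2 ^ n := Nat.pow_le_pow_right (by norm_num) hn
      omega
    -- support of t is nonempty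
    have hTfilt : (Finset.univ.filter (fun i => t.1 i ≠ 0)).Nonempty := by
      obtain ⟨i, hi⟩ := (htne t).mp htne0
      exact ⟨i, Finset.mem_filter.mpr ⟨Finset.mem_univ i, hi⟩⟩
    -- μ w = sum over image of jf
    have hset : Finset.univ.filter (fun l => w.1 l ≠ 0)
        = (Finset.univ.filter fun i => t.1 i ≠ 0).image jf := by
      rw [← htu]
      ext l
      simp only [Finset.mem_filter, Finset.mem_univ, true_and, Finset.mem_image]
      constructor
      · intro h
        by_cases hc : ∃ i, t.1 i ≠ 0 ∧ jf i = l
        · obtain ⟨i, hi, hji⟩ := hc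
          exact ⟨i, hi, hji⟩
        · exfalso
          apply h
          show (if ∃ i, t.1 i ≠ 0 ∧ jf i = l then 1 else 0) = 0
          exact if_neg hc
      · rintro ⟨i, hi, rfl⟩
        show (if ∃ i', t.1 i' ≠ 0 ∧ jf i' = jf i then 1 else 0) ≠ 0
        rw [if_pos ⟨i, hi, rfl⟩]
        omega
    have hμw : μ w = ∑ i ∈ Finset.univ.filter (fun i => t.1 i ≠ 0), ((jf i : ℕ) + 1) := by
      rw [hμ]
      dsimp only
      rw [hset, Finset.sum_image (fun i _ i' _ h => hjinj h)]
    have hlt : μ w < μ t := by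
      rw [hμw, hμ]
      exact Finset.sum_lt_sum_of_nonempty hTfilt fun i hi => by
        have := hkey i (Finset.mem_filter.mp hi).2
        omega
    have hge : μ t ≤ μ w := hwmax t (Finset.mem_filter.mpr ⟨htsupp, htne0⟩)
    omega
  -- conclude
  have hFsingle : F = Finsupp.single (zeroIdx n) (F (zeroIdx n)) :=
    Finsupp.support_subset_singleton.mp hsupp0
  -- F 0 is idempotent in LL
  have hc0 : F (zeroIdx n) * F (zeroIdx n) = F (zeroIdx n) := by
    have h0 := hcoef (zeroIdx n)
    have hzadm : Adm (zeroIdx n) := fun i => Or.inl rfl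
    have hcz : cpow (zeroIdx n) = 0 := by
      rw [hcpow]
      simp [zeroIdx]
    rw [Finset.sum_congr rfl (fun t ht => if_congr (hu0 t) rfl rfl)] at h0
    rw [Finset.sum_ite_eq' (F.support.filter Adm) (zeroIdx n)
      (fun t => (F t) ^ 2 * (LaurentPolynomial.T ((cpow t : ℤ)) : LL))] at h0
    by_cases hz : zeroIdx n ∈ F.support
    · rw [if_pos (Finset.mem_filter.mpr ⟨hz, hzadm⟩), hcz, Nat.cast_zero,
        LaurentPolynomial.T_zero, mul_one, sq] at h0
      rw [← h0]
    · have : F (zeroIdx n) = 0 := Finsupp.notMem_support_iff.mp hz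
      rw [this, mul_zero]
  have hc01 : F (zeroIdx n) = 0 ∨ F (zeroIdx n) = 1 := by
    have h2 : F (zeroIdx n) * (F (zeroIdx n) - 1) = 0 := by
      rw [mul_sub, hc0, mul_one, sub_self]
    rcases mul_eq_zero.mp h2 with h | h
    · exact Or.inl h
    · exact Or.inr (sub_eq_zero.mp h)
  have heF : e = F (zeroIdx n) • (1 : A) := by
    have := congrArg (b.repr.symm) hFsingle
    rw [hF, LinearEquiv.symm_apply_apply] at this
    rw [this, Module.Basis.repr_symm_single, hone]
  rcases hc01 with h | h
  · left; rw [heF, h, zero_smul]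
  · right; rw [heF, h, one_smul]


end
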